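/- Let 0 ≤ t₀ < T, c ≥ 0, let x : [t₀,T] → [0,∞) be continuous, and let h : [t₀,T] → [0,∞) be integrable. Suppose that for every t ∈ [t₀,T], x(t)² ≤ c ∫_t^T x(s) h(s) ds. Then for every t ∈ [t₀,T], x(t) ≤ (c/2) ∫_t^T h(s) ds. -/

import Mathlib

open MeasureTheory Set intervalIntegral

/-- Fubini-type identity: for `g` integrable and nonnegative on `[a,b]`,
`∫ s in [a,b], g s * (∫ u in [s,b], g u) = (∫ [a,b] g)² / 2`. -/
private lemma fubini_half_sq (a b : ℝ) (g : ℝ → ℝ)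
    (hg : IntegrableOn g (Icc a b)) (hg0 : ∀ u ∈ Icc a b, 0 ≤ g u) :
    (∫ s in Icc a b, g s * ∫ u in Ici s, g u ∂(volume.restrict (Icc a b)))
      = (∫ s in Icc a b, g s) ^ 2 / 2 := by
  set μ := volume.restrict (Icc a b) with hμ
  have hgi : Integrable g μ := hg
  have hg0' : 0 ≤ᵐ[μ] g := (ae_restrict_iff' measurableSet_Icc).2 (ae_of_all _ hg0)
  set A : ℝ → ℝ := fun s => ∫ u in Ici s, g u ∂μ with hA
  set B : ℝ → ℝ := fun s => ∫ u in Iio s, g u ∂μ with hB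
  have hABsum : ∀ s, A s + B s = ∫ u, g u ∂μ := by
    intro s
    have := integral_add_compl (measurableSet_Ici (a := s)) hgi
    rwa [compl_Ici] at this
  have hμs : ∀ s : ℝ, μ {s} = 0 := fun s => measure_singleton s
  have hA' : ∀ s, (∫ u in Ioi s, g u ∂μ) = A s := fun s =>
    (integral_Ici_eq_integral_Ioi' (hμs s)).symm
  have hBmono : Monotone B := by
    intro s s' hss'
    exact setIntegral_mono_set (hgi.integrableOn) (ae_restrict_of_ae hg0')
      (HasSubset.Subset.eventuallyLE (Iio_subset_Iio hss'))
  have hBmeas : Measurable B := hBmono.measurable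
  have hAmeas : Measurable A := by
    have : A = fun s => (∫ u, g u ∂μ) - B s := by
      funext s; have := hABsum s; linarith
    rw [this]
    exact measurable_const.sub hBmeas
  have hBnn : ∀ s, 0 ≤ B s := fun s =>
    setIntegral_nonneg_of_ae_restrict (ae_restrict_of_ae hg0')
  have hAnn : ∀ s, 0 ≤ A s := fun s =>
    setIntegral_nonneg_of_ae_restrict (ae_restrict_of_ae hg0')
  have hBle : ∀ s, B s ≤ ∫ u, g u ∂μ := fun s => setIntegral_le_integral hgi hg0'
  have hAle : ∀ s, A s ≤ ∫ u, g u ∂μ := fun s => setIntegral_le_integral hgi hg0'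
  have hgA : Integrable (fun s => g s * A s) μ := by
    have := hgi.bdd_mul (c := ∫ u, g u ∂μ)
      (hAmeas.aestronglyMeasurable) (ae_of_all _ fun s => by
        rw [Real.norm_eq_abs, abs_of_nonneg (hAnn s)]; exact hAle s)
    simpa [mul_comm] using this
  have hgB : Integrable (fun s => g s * B s) μ := by
    have := hgi.bdd_mul (c := ∫ u, g u ∂μ)
      (hBmeas.aestronglyMeasurable) (ae_of_all _ fun s => by
        rw [Real.norm_eq_abs, abs_of_nonneg (hBnn s)]; exact hBle s)
    simpa [mul_comm] using this
  -- Fubini swap: ∫ g·B = ∫ g·A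
  have key : (∫ s, g s * B s ∂μ) = ∫ s, g s * A s ∂μ := by
    set F : ℝ → ℝ → ℝ := fun s u =>
      Set.indicator {p : ℝ × ℝ | p.2 < p.1} (fun p => g p.1 * g p.2) (s, u) with hF
    have hS : MeasurableSet {p : ℝ × ℝ | p.2 < p.1} :=
      measurableSet_lt measurable_snd measurable_fst
    have hFint : Integrable (Function.uncurry F) (μ.prod μ) := by
      have h1 : Integrable (fun p : ℝ × ℝ => g p.1 * g p.2) (μ.prod μ) :=
        hgi.mul_prod hgi
      have h2 := h1.indicator hS
      have : Function.uncurry F =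
          {p : ℝ × ℝ | p.2 < p.1}.indicator (fun p => g p.1 * g p.2) := by
        funext p
        simp only [Function.uncurry, hF]
      rwa [this]
    have hleft : ∀ s, (∫ u, F s u ∂μ) = g s * B s := by
      intro s
      have h1 : (fun u => F s u) = (Iio s).indicator (fun u => g s * g u) := by
        funext u
        simp only [hF, Set.indicator_apply, mem_setOf_eq, mem_Iio]
      rw [h1, MeasureTheory.integral_indicator measurableSet_Iio, MeasureTheory.integral_const_mul]
    have hright : ∀ u, (∫ s, F s u ∂μ) = g u * A u := by
      intro u
      have h1 : (fun s => F s u) = (Ioi u).indicator (fun s => g s * g u) := by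
        funext s
        simp only [hF, Set.indicator_apply, mem_setOf_eq, mem_Ioi]
      rw [h1, MeasureTheory.integral_indicator measurableSet_Ioi, MeasureTheory.integral_mul_const,
        hA', mul_comm]
    calc (∫ s, g s * B s ∂μ) = ∫ s, ∫ u, F s u ∂μ ∂μ := by
          exact (integral_congr_ae (ae_of_all _ fun s => hleft s)).symm
      _ = ∫ u, ∫ s, F s u ∂μ ∂μ := integral_integral_swap hFint
      _ = ∫ u, g u * A u ∂μ := integral_congr_ae (ae_of_all _ fun u => hright u)
  have main : (∫ s, g s ∂μ) ^ 2 = 2 * ∫ s, g s * A s ∂μ := by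
    calc (∫ s, g s ∂μ) ^ 2 = ∫ s, g s * (∫ u, g u ∂μ) ∂μ := by
          rw [MeasureTheory.integral_mul_const, sq]
      _ = ∫ s, (g s * A s + g s * B s) ∂μ := by
          refine integral_congr_ae (ae_of_all _ fun s => ?_)
          show g s * (∫ u, g u ∂μ) = g s * A s + g s * B s
          rw [← hABsum s]; ring
      _ = (∫ s, g s * A s ∂μ) + ∫ s, g s * B s ∂μ := integral_add hgA hgB
      _ = 2 * ∫ s, g s * A s ∂μ := by rw [key]; ring
  linarith [main]

/-- Bihari-type backward integral inequality (Lemma 20 of Maticiuc–Nie):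
if x ≥ 0 is continuous on [t₀,T], h ≥ 0 is integrable on [t₀,T], and
x(t)² ≤ c ∫_t^T x(s) h(s) ds for every t ∈ [t₀,T], then x(t) ≤ (c/2) ∫_t^T h(s) ds. -/
theorem bihari_backward
    (t₀ T c : ℝ) (ht₀ : 0 ≤ t₀) (ht₀T : t₀ < T) (hc : 0 ≤ c)
    (x h : ℝ → ℝ)
    (hx_cont : ContinuousOn x (Set.Icc t₀ T))
    (hx_nonneg : ∀ t ∈ Set.Icc t₀ T, 0 ≤ x t)
    (hh_int : IntegrableOn h (Set.Icc t₀ T))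
    (hh_nonneg : ∀ t ∈ Set.Icc t₀ T, 0 ≤ h t)
    (hx_le : ∀ t ∈ Set.Icc t₀ T, x t ^ 2 ≤ c * ∫ s in t..T, x s * h s) :
    ∀ t ∈ Set.Icc t₀ T, x t ≤ (c / 2) * ∫ s in t..T, h s := by
  set H : ℝ → ℝ := fun t => ∫ s in t..T, h s with hHdef
  -- basic integrability facts
  have hsub : ∀ {t s : ℝ}, t ∈ Icc t₀ T → s ∈ Icc t T → Icc t s ⊆ Icc t₀ T :=
    fun {t s} ht hs => Icc_subset_Icc ht.1 hs.2
  have hii : ∀ {t s : ℝ}, t ∈ Icc t₀ T → s ∈ Icc t T →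
      IntervalIntegrable h volume t s := by
    intro t s ht hs
    refine (hh_int.mono_set ?_).intervalIntegrable
    rw [uIcc_of_le hs.1]
    exact hsub ht hs
  have hiiT : ∀ {t : ℝ}, t ∈ Icc t₀ T → IntervalIntegrable h volume t T :=
    fun {t} ht => hii ht (right_mem_Icc.2 ht.2)
  have hH_nonneg : ∀ t ∈ Icc t₀ T, 0 ≤ H t := by
    intro t ht
    exact intervalIntegral.integral_nonneg ht.2 fun u hu =>
      hh_nonneg u ⟨ht.1.trans hu.1, hu.2⟩
  have hH_anti : ∀ t ∈ Icc t₀ T, ∀ s ∈ Icc t T, H s ≤ H t := by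
    intro t ht s hs
    have hsmem : s ∈ Icc t₀ T := ⟨ht.1.trans hs.1, hs.2⟩
    have hsplit : (∫ u in t..s, h u) + ∫ u in s..T, h u = ∫ u in t..T, h u :=
      intervalIntegral.integral_add_adjacent_intervals (hii ht hs) (hiiT hsmem)
    have h1 : 0 ≤ ∫ u in t..s, h u :=
      intervalIntegral.integral_nonneg hs.1 fun u hu =>
        hh_nonneg u ⟨ht.1.trans hu.1, hu.2.trans hs.2⟩
    simp only [hHdef]
    linarith
  -- continuity of H on [t₀, T]
  have hH_cont : ContinuousOn H (Icc t₀ T) := by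
    have : IntegrableOn h (uIcc t₀ T) := by rwa [uIcc_of_le ht₀T.le]
    simpa [hHdef, uIcc_of_le ht₀T.le] using continuousOn_primitive_interval_left this
  -- bound for x
  obtain ⟨M, hM⟩ : ∃ M, ∀ s ∈ Icc t₀ T, ‖x s‖ ≤ M :=
    isCompact_Icc.exists_bound_of_continuousOn hx_cont
  have hxh_ii : ∀ {t : ℝ}, t ∈ Icc t₀ T →
      IntervalIntegrable (fun s => x s * h s) volume t T := by
    intro t ht
    have hint : IntegrableOn h (Icc t T) := hh_int.mono_set (Icc_subset_Icc_left ht.1)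
    have hxm : AEStronglyMeasurable x (volume.restrict (Icc t T)) :=
      (hx_cont.mono (Icc_subset_Icc_left ht.1)).aestronglyMeasurable measurableSet_Icc
    have h1 : IntegrableOn (fun s => x s * h s) (Icc t T) := by
      refine Integrable.bdd_mul (c := M) hint hxm ?_
      exact (ae_restrict_iff' measurableSet_Icc).2 (ae_of_all _ fun s hs =>
        hM s ⟨ht.1.trans hs.1, hs.2⟩)
    have h2 : IntegrableOn (fun s => x s * h s) (uIcc t T) := by
      rwa [uIcc_of_le ht.2]
    exact h2.intervalIntegrable
  have hHh_ii : ∀ {t : ℝ}, t ∈ Icc t₀ T →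
      IntervalIntegrable (fun s => H s * h s) volume t T := by
    intro t ht
    have hint : IntegrableOn h (Icc t T) := hh_int.mono_set (Icc_subset_Icc_left ht.1)
    have hHm : AEStronglyMeasurable H (volume.restrict (Icc t T)) :=
      (hH_cont.mono (Icc_subset_Icc_left ht.1)).aestronglyMeasurable measurableSet_Icc
    have hHbd : ∀ s ∈ Icc t T, ‖H s‖ ≤ H t := by
      intro s hs
      have hsmem : s ∈ Icc t₀ T := ⟨ht.1.trans hs.1, hs.2⟩
      rw [Real.norm_eq_abs, abs_of_nonneg (hH_nonneg s hsmem)]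
      exact hH_anti t ht s hs
    have h1 : IntegrableOn (fun s => H s * h s) (Icc t T) := by
      refine Integrable.bdd_mul (c := H t) hint hHm ?_
      exact (ae_restrict_iff' measurableSet_Icc).2 (ae_of_all _ hHbd)
    have h2 : IntegrableOn (fun s => H s * h s) (uIcc t T) := by
      rwa [uIcc_of_le ht.2]
    exact h2.intervalIntegrable
  -- the key Fubini identity
  have key : ∀ t ∈ Icc t₀ T, (∫ s in t..T, H s * h s) = H t ^ 2 / 2 := by
    intro t ht
    have hint : IntegrableOn h (Icc t T) := hh_int.mono_set (Icc_subset_Icc_left ht.1)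
    have fub := fubini_half_sq t T h hint
      (fun u hu => hh_nonneg u ⟨ht.1.trans hu.1, hu.2⟩)
    have hHset : ∀ s ∈ Icc t T, H s = ∫ u in Icc s T, h u := by
      intro s hs
      show (∫ u in s..T, h u) = _
      rw [intervalIntegral.integral_of_le hs.2, integral_Icc_eq_integral_Ioc]
    have hinner : ∀ s ∈ Icc t T,
        (∫ u in Ici s, h u ∂(volume.restrict (Icc t T))) = H s := by
      intro s hs
      rw [Measure.restrict_restrict measurableSet_Ici]
      have hset : Ici s ∩ Icc t T = Icc s T := by
        ext u
        simp only [mem_inter_iff, mem_Ici, mem_Icc]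
        exact ⟨fun ⟨h1, _, h3⟩ => ⟨h1, h3⟩, fun ⟨h1, h2⟩ => ⟨h1, hs.1.trans h1, h2⟩⟩
      rw [hset, ← hHset s hs]
    have hLHS : (∫ s in Icc t T, h s * ∫ u in Ici s, h u ∂(volume.restrict (Icc t T)))
        = ∫ s in t..T, H s * h s := by
      rw [intervalIntegral.integral_of_le ht.2, ← integral_Icc_eq_integral_Ioc]
      refine setIntegral_congr_fun measurableSet_Icc fun s hs => ?_
      rw [hinner s hs, mul_comm]
    have hRHS : (∫ s in Icc t T, h s) = H t := by
      show _ = ∫ u in t..T, h u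
      rw [intervalIntegral.integral_of_le ht.2, integral_Icc_eq_integral_Ioc]
    rw [hLHS, hRHS] at fub
    exact fub
  -- iteration step
  have step : ∀ K : ℝ, 0 ≤ K → (∀ s ∈ Icc t₀ T, x s ≤ K * H s) →
      ∀ t ∈ Icc t₀ T, x t ≤ Real.sqrt (c * K / 2) * H t := by
    intro K hK hbound t ht
    have h1 : x t ^ 2 ≤ c * ∫ s in t..T, x s * h s := hx_le t ht
    have h2 : (∫ s in t..T, x s * h s) ≤ ∫ s in t..T, K * (H s * h s) := by
      refine intervalIntegral.integral_mono_on ht.2 (hxh_ii ht)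
        ((hHh_ii ht).const_mul K) fun s hs => ?_
      have hsmem : s ∈ Icc t₀ T := ⟨ht.1.trans hs.1, hs.2⟩
      have := mul_le_mul_of_nonneg_right (hbound s hsmem) (hh_nonneg s hsmem)
      calc x s * h s ≤ K * H s * h s := this
        _ = K * (H s * h s) := by ring
    have h3 : (∫ s in t..T, K * (H s * h s)) = K * (H t ^ 2 / 2) := by
      rw [intervalIntegral.integral_const_mul, key t ht]
    have h4 : x t ^ 2 ≤ (c * K / 2) * H t ^ 2 := by
      nlinarith [mul_le_mul_of_nonneg_left h2 hc]
    have h5 : (c * K / 2) * H t ^ 2 = (Real.sqrt (c * K / 2) * H t) ^ 2 := by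
      rw [mul_pow, Real.sq_sqrt (div_nonneg (mul_nonneg hc hK) two_pos.le)]
    calc x t = Real.sqrt (x t ^ 2) := (Real.sqrt_sq (hx_nonneg t ht)).symm
      _ ≤ Real.sqrt ((Real.sqrt (c * K / 2) * H t) ^ 2) := by
          refine Real.sqrt_le_sqrt ?_
          rw [← h5]; linarith
      _ = Real.sqrt (c * K / 2) * H t :=
          Real.sqrt_sq (mul_nonneg (Real.sqrt_nonneg _) (hH_nonneg t ht))
  -- base case: x ≤ c * H via maximum argument
  have base : ∀ t ∈ Icc t₀ T, x t ≤ c * H t := by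
    intro t ht
    obtain ⟨s₁, hs₁mem, hmax⟩ := isCompact_Icc.exists_isMaxOn
      (nonempty_Icc.2 ht.2) (hx_cont.mono (Icc_subset_Icc_left ht.1))
    have hs₁ : s₁ ∈ Icc t₀ T := ⟨ht.1.trans hs₁mem.1, hs₁mem.2⟩
    have h1 : x s₁ ^ 2 ≤ c * ∫ s in s₁..T, x s * h s := hx_le s₁ hs₁
    have h2 : (∫ s in s₁..T, x s * h s) ≤ ∫ s in s₁..T, x s₁ * h s := by
      refine intervalIntegral.integral_mono_on hs₁.2 (hxh_ii hs₁)
        ((hiiT hs₁).const_mul _) fun u hu => ?_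
      have humem : u ∈ Icc t₀ T := ⟨hs₁.1.trans hu.1, hu.2⟩
      have hux : x u ≤ x s₁ := hmax ⟨hs₁mem.1.trans hu.1, hu.2⟩
      exact mul_le_mul_of_nonneg_right hux (hh_nonneg u humem)
    have h3 : (∫ s in s₁..T, x s₁ * h s) = x s₁ * H s₁ :=
      intervalIntegral.integral_const_mul _ _
    have hxt : x t ≤ x s₁ := hmax (left_mem_Icc.2 ht.2)
    rcases eq_or_lt_of_le (hx_nonneg s₁ hs₁) with h0 | h0
    · have hx0 : x t ≤ 0 := hxt.trans_eq h0.symm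
      have : 0 ≤ c * H t := mul_nonneg hc (hH_nonneg t ht)
      linarith
    · have h4 : x s₁ ^ 2 ≤ c * (x s₁ * H s₁) := by rw [← h3]; nlinarith
      have h5 : x s₁ ≤ c * H s₁ := by nlinarith
      have h6 : H s₁ ≤ H t := hH_anti t ht s₁ hs₁mem
      calc x t ≤ x s₁ := hxt
        _ ≤ c * H s₁ := h5
        _ ≤ c * H t := mul_le_mul_of_nonneg_left h6 hc
  -- iteration: aₙ = c * 2^((1/2)^n - 1), x ≤ aₙ · H, aₙ → c/2
  set a : ℕ → ℝ := fun n => c * (2 : ℝ) ^ ((1 / 2 : ℝ) ^ n - 1) with ha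
  have hclaim : ∀ n, ∀ s ∈ Icc t₀ T, x s ≤ a n * H s := by
    intro n
    induction n with
    | zero =>
      intro s hs
      have h0 : a 0 = c := by simp [ha]
      rw [h0]
      exact base s hs
    | succ n ih =>
      intro s hs
      have han : 0 ≤ a n := by
        have : (0:ℝ) < (2 : ℝ) ^ ((1 / 2 : ℝ) ^ n - 1) := Real.rpow_pos_of_pos two_pos _
        exact mul_nonneg hc this.le
      have hstep := step (a n) han ih s hs
      have heq : Real.sqrt (c * a n / 2) = a (n + 1) := by
        have hexp : c * a n / 2 = c ^ 2 * (2 : ℝ) ^ (((1 / 2 : ℝ) ^ n - 1) - 1) := by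
          rw [ha]
          simp only
          rw [Real.rpow_sub two_pos ((1 / 2 : ℝ) ^ n - 1) 1, Real.rpow_one]
          ring
        rw [hexp, Real.sqrt_mul (sq_nonneg c), Real.sqrt_sq hc]
        have hs2 : Real.sqrt ((2 : ℝ) ^ (((1 / 2 : ℝ) ^ n - 1) - 1))
            = (2 : ℝ) ^ ((1 / 2 : ℝ) ^ (n + 1) - 1) := by
          rw [Real.sqrt_eq_rpow, ← Real.rpow_mul (by norm_num : (0:ℝ) ≤ 2)]
          congr 1
          rw [pow_succ]
          ring
        rw [hs2, ha]
      rwa [heq] at hstep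
  intro t ht
  have htend : Filter.Tendsto a Filter.atTop (nhds (c / 2)) := by
    have he : Filter.Tendsto (fun n : ℕ => (1 / 2 : ℝ) ^ n - 1) Filter.atTop
        (nhds (0 - 1)) :=
      (tendsto_pow_atTop_nhds_zero_of_lt_one (by norm_num) (by norm_num)).sub_const 1
    have hrpow : Filter.Tendsto (fun n : ℕ => (2 : ℝ) ^ ((1 / 2 : ℝ) ^ n - 1))
        Filter.atTop (nhds ((2 : ℝ) ^ ((0 : ℝ) - 1))) :=
      ((Real.continuousAt_const_rpow (by norm_num : (2:ℝ) ≠ 0)).tendsto).comp he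
    have h2 : ((2 : ℝ) ^ ((0 : ℝ) - 1)) = 1 / 2 := by
      rw [zero_sub, Real.rpow_neg_one]
      norm_num
    have hfin := hrpow.const_mul c
    rw [h2] at hfin
    have : c * (1 / 2) = c / 2 := by ring
    rwa [this] at hfin
  have hlim : Filter.Tendsto (fun n => a n * H t) Filter.atTop
      (nhds ((c / 2) * H t)) := htend.mul_const (H t)
  exact ge_of_tendsto' hlim fun n => hclaim n t ht
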